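/- Let 𝒞 and ℋ be classes of measurable functions 𝒳 → ℝ with all products c·h bounded by 1. Suppose μ̃₁, μ̃₀ : 𝒳 → ℝ are bounded measurable functions such that for all c ∈ 𝒞, h ∈ ℋ: |E[(Y − μ̃₁(X)) · (𝟙[T=1]/e(X)) · c(X) h(X)]| ≤ α and |E[(Y − μ̃₀(X)) · (𝟙[T=0]/(1−e(X))) · c(X) h(X)]| ≤ α. Let φ(X,T,Y; μ̃) be the doubly-robust pseudo-outcome with true propensity e and outcome models μ̃₁, μ̃₀, let τ̃ = μ̃₁ − μ̃₀, and let τ : 𝒳 → ℝ be any bounded measurable function. Then |sup_{c,h ∈ 𝒞×ℋ} E[(φ(X,T,Y;μ̃) − τ(X)) c(X) h(X)] − sup_{c,h ∈ 𝒞×ℋ} E[(τ̃(X) − τ(X)) c(X) h(X)]| ≤ 2α. -/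
import Mathlib
open MeasureTheory

lemma my_integrable_of_bound {Ω : Type*} [MeasurableSpace Ω] (P : Measure Ω)
    [IsProbabilityMeasure P] (f : Ω → ℝ) (hf : Measurable f) (C : ℝ)
    (hC : ∀ ω, |f ω| ≤ C) : Integrable f P :=
  ⟨hf.aestronglyMeasurable, HasFiniteIntegral.of_bounded
    (ae_of_all _ (by simpa [Real.norm_eq_abs] using hC))⟩

lemma my_abs_integral_le {Ω : Type*} [MeasurableSpace Ω] (P : Measure Ω)
    [IsProbabilityMeasure P] (f : Ω → ℝ) (C : ℝ) (hC : ∀ ω, |f ω| ≤ C) :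
    |∫ ω, f ω ∂P| ≤ C := by
  have := norm_integral_le_of_norm_le_const (μ := P) (f := f) (C := C)
    (ae_of_all _ (by simpa [Real.norm_eq_abs] using hC))
  simpa [Real.norm_eq_abs, measure_univ] using this

lemma my_abs_sSup_sub_sSup_le {A B : Set ℝ} (hA : A.Nonempty) (hB : B.Nonempty)
    (hAb : BddAbove A) (hBb : BddAbove B) {ε : ℝ}
    (h1 : ∀ a ∈ A, ∃ b ∈ B, a ≤ b + ε) (h2 : ∀ b ∈ B, ∃ a ∈ A, b ≤ a + ε) :
    |sSup A - sSup B| ≤ ε := by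
  rw [abs_sub_le_iff]
  constructor
  · rw [sub_le_iff_le_add]
    apply csSup_le hA
    intro a ha
    obtain ⟨b, hb, hab⟩ := h1 a ha
    have := le_csSup hBb hb
    linarith
  · rw [sub_le_iff_le_add]
    apply csSup_le hB
    intro b hb
    obtain ⟨a, ha, hba⟩ := h2 b hb
    have := le_csSup hAb ha
    linarith

theorem multiaccurate_Tlearner_is_multiaccurate_DRlearner
    {Ω 𝒳 : Type*} [MeasurableSpace Ω] [MeasurableSpace 𝒳]
    (P : Measure Ω) [IsProbabilityMeasure P]
    (X : Ω → 𝒳) (T Y : Ω → ℝ) (e μt1 μt0 τ : 𝒳 → ℝ)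
    (𝒞 ℋ : Set (𝒳 → ℝ)) (α : ℝ)
    (hX : Measurable X) (hT : Measurable T) (hY : Measurable Y)
    (he : Measurable e) (hμt1 : Measurable μt1) (hμt0 : Measurable μt0)
    (hτ : Measurable τ)
    (hTbin : ∀ ω, T ω = 0 ∨ T ω = 1)
    (B : ℝ) (hYb : ∀ ω, |Y ω| ≤ B) (hμt1b : ∀ x, |μt1 x| ≤ B)
    (hμt0b : ∀ x, |μt0 x| ≤ B) (hτb : ∀ x, |τ x| ≤ B)
    (ν : ℝ) (hν : 0 < ν) (heb : ∀ x, ν ≤ e x ∧ e x ≤ 1 - ν)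
    (h𝒞ne : 𝒞.Nonempty) (hℋne : ℋ.Nonempty)
    (h𝒞 : ∀ c ∈ 𝒞, Measurable c) (hℋ : ∀ h ∈ ℋ, Measurable h)
    -- all products `c·h` are bounded by 1
    (hprodb : ∀ c ∈ 𝒞, ∀ h ∈ ℋ, ∀ x, |c x * h x| ≤ 1)
    -- multi-accuracy of the outcome models over the richer product class
    (hMA1 : ∀ c ∈ 𝒞, ∀ h ∈ ℋ,
      |∫ ω, (Y ω - μt1 (X ω)) * (T ω / e (X ω)) * (c (X ω) * h (X ω)) ∂P| ≤ α)
    (hMA0 : ∀ c ∈ 𝒞, ∀ h ∈ ℋ,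
      |∫ ω, (Y ω - μt0 (X ω)) * ((1 - T ω) / (1 - e (X ω))) * (c (X ω) * h (X ω)) ∂P| ≤ α) :
    |sSup {r : ℝ | ∃ c ∈ 𝒞, ∃ h ∈ ℋ, r =
        ∫ ω, ((((T ω - e (X ω)) / (e (X ω) * (1 - e (X ω))))
            * (Y ω - (if T ω = 1 then μt1 (X ω) else μt0 (X ω)))
            + μt1 (X ω) - μt0 (X ω)) - τ (X ω)) * (c (X ω) * h (X ω)) ∂P}
      - sSup {r : ℝ | ∃ c ∈ 𝒞, ∃ h ∈ ℋ, r =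
        ∫ ω, ((μt1 (X ω) - μt0 (X ω)) - τ (X ω)) * (c (X ω) * h (X ω)) ∂P}| ≤ 2 * α := by
  obtain ⟨c₀, hc₀⟩ := h𝒞ne
  obtain ⟨h₀, hh₀⟩ := hℋne
  have hα : 0 ≤ α := le_trans (abs_nonneg _) (hMA1 c₀ hc₀ h₀ hh₀)
  have hΩ : Nonempty Ω := by
    rcases isEmpty_or_nonempty Ω with hE | hE
    · exfalso
      have h0 : P Set.univ = 0 := by simp [Set.univ_eq_empty_iff.mpr hE]
      rw [measure_univ] at h0
      exact one_ne_zero h0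
    · exact hE
  have hB : 0 ≤ B := le_trans (abs_nonneg _) (hYb hΩ.some)
  -- the main per-(c,h) estimates
  have main : ∀ c ∈ 𝒞, ∀ h ∈ ℋ,
      |(∫ ω, ((((T ω - e (X ω)) / (e (X ω) * (1 - e (X ω))))
            * (Y ω - (if T ω = 1 then μt1 (X ω) else μt0 (X ω)))
            + μt1 (X ω) - μt0 (X ω)) - τ (X ω)) * (c (X ω) * h (X ω)) ∂P)
        - ∫ ω, ((μt1 (X ω) - μt0 (X ω)) - τ (X ω)) * (c (X ω) * h (X ω)) ∂P| ≤ 2 * α ∧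
      |∫ ω, ((μt1 (X ω) - μt0 (X ω)) - τ (X ω)) * (c (X ω) * h (X ω)) ∂P| ≤ 3 * B := by
    intro c hc h hh
    have hcm := h𝒞 c hc
    have hhm := hℋ h hh
    have hchb := hprodb c hc h hh
    -- bounds for the three pieces
    have hgb : ∀ ω, |((μt1 (X ω) - μt0 (X ω)) - τ (X ω)) * (c (X ω) * h (X ω))| ≤ 3 * B := by
      intro ω
      have h1 := hμt1b (X ω); have h2 := hμt0b (X ω); have h3 := hτb (X ω)
      have ha : |(μt1 (X ω) - μt0 (X ω)) - τ (X ω)| ≤ 3 * B := by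
        rw [abs_le] at h1 h2 h3 ⊢; constructor <;> linarith
      calc |((μt1 (X ω) - μt0 (X ω)) - τ (X ω)) * (c (X ω) * h (X ω))|
          = |(μt1 (X ω) - μt0 (X ω)) - τ (X ω)| * |c (X ω) * h (X ω)| := abs_mul _ _
        _ ≤ (3 * B) * 1 := mul_le_mul ha (hchb (X ω)) (abs_nonneg _) (by linarith)
        _ = 3 * B := by ring
    have hTe : ∀ ω, |T ω / e (X ω)| ≤ 1 / ν := by
      intro ω
      have he1 := (heb (X ω)).1
      have hepos : 0 < e (X ω) := lt_of_lt_of_le hν he1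
      rcases hTbin ω with h' | h' <;> rw [h']
      · simp; positivity
      · rw [abs_of_nonneg (by positivity)]
        exact one_div_le_one_div_of_le hν he1
    have hTe' : ∀ ω, |(1 - T ω) / (1 - e (X ω))| ≤ 1 / ν := by
      intro ω
      have he2 := (heb (X ω)).2
      have hepos : 0 < 1 - e (X ω) := by linarith
      rcases hTbin ω with h' | h' <;> rw [h']
      · rw [abs_of_nonneg (by positivity)]
        simp only [sub_zero]
        exact one_div_le_one_div_of_le hν (by linarith)
      · simp; positivity
    have hub : ∀ ω, |(Y ω - μt1 (X ω)) * (T ω / e (X ω)) * (c (X ω) * h (X ω))|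
        ≤ (2 * B) * (1 / ν) * 1 := by
      intro ω
      have h1 := hYb ω; have h2 := hμt1b (X ω)
      have ha : |Y ω - μt1 (X ω)| ≤ 2 * B := by rw [abs_le] at h1 h2 ⊢; constructor <;> linarith
      rw [abs_mul, abs_mul]
      apply mul_le_mul _ (hchb (X ω)) (abs_nonneg _) (by positivity)
      exact mul_le_mul ha (hTe ω) (abs_nonneg _) (by linarith)
    have hvb : ∀ ω, |(Y ω - μt0 (X ω)) * ((1 - T ω) / (1 - e (X ω))) * (c (X ω) * h (X ω))|
        ≤ (2 * B) * (1 / ν) * 1 := by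
      intro ω
      have h1 := hYb ω; have h2 := hμt0b (X ω)
      have ha : |Y ω - μt0 (X ω)| ≤ 2 * B := by rw [abs_le] at h1 h2 ⊢; constructor <;> linarith
      rw [abs_mul, abs_mul]
      apply mul_le_mul _ (hchb (X ω)) (abs_nonneg _) (by positivity)
      exact mul_le_mul ha (hTe' ω) (abs_nonneg _) (by linarith)
    -- measurability
    have hchm : Measurable fun ω => c (X ω) * h (X ω) := ((hcm.comp hX).mul (hhm.comp hX))
    have hgm : Measurable fun ω => ((μt1 (X ω) - μt0 (X ω)) - τ (X ω)) * (c (X ω) * h (X ω)) :=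
      (((hμt1.comp hX).sub (hμt0.comp hX)).sub (hτ.comp hX)).mul hchm
    have hum : Measurable fun ω =>
        (Y ω - μt1 (X ω)) * (T ω / e (X ω)) * (c (X ω) * h (X ω)) :=
      (((hY.sub (hμt1.comp hX)).mul (hT.div (he.comp hX)))).mul hchm
    have hvm : Measurable fun ω =>
        (Y ω - μt0 (X ω)) * ((1 - T ω) / (1 - e (X ω))) * (c (X ω) * h (X ω)) :=
      (((hY.sub (hμt0.comp hX)).mul
        ((measurable_const.sub hT).div (measurable_const.sub (he.comp hX))))).mul hchm
    -- integrability
    have hIg := my_integrable_of_bound P _ hgm (3 * B) hgb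
    have hIu := my_integrable_of_bound P _ hum ((2 * B) * (1 / ν) * 1) hub
    have hIv := my_integrable_of_bound P _ hvm ((2 * B) * (1 / ν) * 1) hvb
    -- pointwise identity
    have key : ∀ ω, ((((T ω - e (X ω)) / (e (X ω) * (1 - e (X ω))))
            * (Y ω - (if T ω = 1 then μt1 (X ω) else μt0 (X ω)))
            + μt1 (X ω) - μt0 (X ω)) - τ (X ω)) * (c (X ω) * h (X ω))
        = ((μt1 (X ω) - μt0 (X ω)) - τ (X ω)) * (c (X ω) * h (X ω))
          + ((Y ω - μt1 (X ω)) * (T ω / e (X ω)) * (c (X ω) * h (X ω))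
            - (Y ω - μt0 (X ω)) * ((1 - T ω) / (1 - e (X ω))) * (c (X ω) * h (X ω))) := by
      intro ω
      have he1 := (heb (X ω)).1
      have he2 := (heb (X ω)).2
      have he0 : e (X ω) ≠ 0 := (lt_of_lt_of_le hν he1).ne'
      have he1' : (1 : ℝ) - e (X ω) ≠ 0 := by
        have h2' : (0:ℝ) < 1 - e (X ω) := by linarith
        exact h2'.ne'
      rcases hTbin ω with h' | h' <;> rw [h'] <;>
        simp only [zero_ne_one, if_false, one_ne_zero, if_true] <;>
        field_simp <;> ring
    have hsplit : (∫ ω, ((((T ω - e (X ω)) / (e (X ω) * (1 - e (X ω))))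
            * (Y ω - (if T ω = 1 then μt1 (X ω) else μt0 (X ω)))
            + μt1 (X ω) - μt0 (X ω)) - τ (X ω)) * (c (X ω) * h (X ω)) ∂P)
        = (∫ ω, ((μt1 (X ω) - μt0 (X ω)) - τ (X ω)) * (c (X ω) * h (X ω)) ∂P)
          + ((∫ ω, (Y ω - μt1 (X ω)) * (T ω / e (X ω)) * (c (X ω) * h (X ω)) ∂P)
            - ∫ ω, (Y ω - μt0 (X ω)) * ((1 - T ω) / (1 - e (X ω))) * (c (X ω) * h (X ω)) ∂P) := by
      calc (∫ ω, ((((T ω - e (X ω)) / (e (X ω) * (1 - e (X ω))))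
              * (Y ω - (if T ω = 1 then μt1 (X ω) else μt0 (X ω)))
              + μt1 (X ω) - μt0 (X ω)) - τ (X ω)) * (c (X ω) * h (X ω)) ∂P)
          = ∫ ω, (((μt1 (X ω) - μt0 (X ω)) - τ (X ω)) * (c (X ω) * h (X ω))
              + ((Y ω - μt1 (X ω)) * (T ω / e (X ω)) * (c (X ω) * h (X ω))
                - (Y ω - μt0 (X ω)) * ((1 - T ω) / (1 - e (X ω))) * (c (X ω) * h (X ω)))) ∂P :=
            integral_congr_ae (ae_of_all _ key)
        _ = _ := by
            have hIuv : Integrable (fun ω =>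
                (Y ω - μt1 (X ω)) * (T ω / e (X ω)) * (c (X ω) * h (X ω))
                - (Y ω - μt0 (X ω)) * ((1 - T ω) / (1 - e (X ω))) * (c (X ω) * h (X ω))) P :=
              hIu.sub hIv
            rw [integral_add hIg hIuv, integral_sub hIu hIv]
    constructor
    · rw [hsplit]
      have h1 := hMA1 c hc h hh
      have h0 := hMA0 c hc h hh
      rw [abs_le] at h1 h0 ⊢
      constructor <;>
        · simp only [add_sub_cancel_left]
          linarith [h1.1, h1.2, h0.1, h0.2]
    · exact my_abs_integral_le P _ (3 * B) hgb
  -- set-level argument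
  apply my_abs_sSup_sub_sSup_le
  · exact ⟨_, c₀, hc₀, h₀, hh₀, rfl⟩
  · exact ⟨_, c₀, hc₀, h₀, hh₀, rfl⟩
  · refine ⟨3 * B + 2 * α, ?_⟩
    rintro r ⟨c, hc, h, hh, rfl⟩
    obtain ⟨hd, hg⟩ := main c hc h hh
    rw [abs_le] at hd hg
    linarith
  · refine ⟨3 * B, ?_⟩
    rintro r ⟨c, hc, h, hh, rfl⟩
    obtain ⟨_, hg⟩ := main c hc h hh
    rw [abs_le] at hg
    linarith
  · rintro a ⟨c, hc, h, hh, rfl⟩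
    refine ⟨_, ⟨c, hc, h, hh, rfl⟩, ?_⟩
    obtain ⟨hd, _⟩ := main c hc h hh
    rw [abs_le] at hd
    linarith
  · rintro b ⟨c, hc, h, hh, rfl⟩
    refine ⟨_, ⟨c, hc, h, hh, rfl⟩, ?_⟩
    obtain ⟨hd, _⟩ := main c hc h hh
    rw [abs_le] at hd
    linarith
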